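/- Let e(ζ) = Σ_{i≥0} α_i ζ^{q^i} be an entire 𝔽_q-linear series and let ω ∈ C. For every t₀ ∈ C with t₀ ∉ {θ^{q^j} : j ≥ 0}, the series S(t₀) := Σ_{j≥0} α_j ω^{q^j}/(θ^{q^j} − t₀) converges. Moreover, for every j₀ ≥ 0, the function (t − θ^{q^{j₀}})·S(t) tends to −α_{j₀} ω^{q^{j₀}} as t tends to θ^{q^{j₀}} (along t ∈ C with t ∉ {θ^{q^j} : j ≥ 0}); in other words S has a simple pole at t = θ^{q^{j₀}} with residue −α_{j₀} ω^{q^{j₀}}. -/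

import Mathlib

open Filter

private lemma ultra_norm_add_eq {C : Type*} [NormedAddCommGroup C] [IsUltrametricDist C]
    {x y : C} (h : ‖y‖ < ‖x‖) : ‖x + y‖ = ‖x‖ := by
  rw [IsUltrametricDist.norm_add_eq_max_of_norm_ne_norm h.ne', max_eq_left h.le]

theorem anderson_generating_function_poles
    {C : Type*} [NormedField C] [CompleteSpace C] [IsAlgClosed C] [IsUltrametricDist C]
    (p e : ℕ) (hp : p.Prime) (he : 0 < e) [CharP C p]
    (q : ℕ) (hq : q = p ^ e)
    (θ : C) (hθ : ‖θ‖ = (q : ℝ))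
    (α : ℕ → C) (hα0 : α 0 = 1)
    (hdecay : ∀ r : ℝ, 0 < r →
      Filter.Tendsto (fun i : ℕ => ‖α i‖ * r ^ (q ^ i)) Filter.atTop (nhds 0))
    (E : C → C) (hE : ∀ ζ : C, E ζ = ∑' i : ℕ, α i * ζ ^ q ^ i)
    (ω : C) :
    (∀ t₀ : C, (∀ j : ℕ, t₀ ≠ θ ^ q ^ j) →
        Summable fun j : ℕ => α j * ω ^ q ^ j / (θ ^ q ^ j - t₀)) ∧
    ∀ j₀ : ℕ,
      Filter.Tendsto
        (fun t : C => (t - θ ^ q ^ j₀) * ∑' j : ℕ, α j * ω ^ q ^ j / (θ ^ q ^ j - t))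
        (nhdsWithin (θ ^ q ^ j₀) {t : C | ∀ j : ℕ, t ≠ θ ^ q ^ j})
        (nhds (-(α j₀ * ω ^ q ^ j₀))) := by
  have hq2 : 2 ≤ q := by
    rw [hq]
    calc 2 ≤ p := hp.two_le
    _ ≤ p ^ e := Nat.le_self_pow he.ne' p
  have hq1R : (1 : ℝ) < (q : ℕ) := by exact_mod_cast lt_of_lt_of_le one_lt_two hq2
  have hq0R : (0 : ℝ) < (q : ℕ) := lt_trans one_pos hq1R
  have hθn : ∀ j : ℕ, ‖θ ^ q ^ j‖ = (q : ℝ) ^ q ^ j := fun j => by rw [norm_pow, hθ]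
  -- the powers (q:ℝ)^(q^j) tend to infinity
  have hpowmono : StrictMono (fun n : ℕ => (q : ℝ) ^ n) := fun m n h => pow_lt_pow_right₀ hq1R h
  have hexp : StrictMono (fun j : ℕ => q ^ j) := fun a b hab => Nat.pow_lt_pow_right hq2 hab
  have hinfty : Tendsto (fun j : ℕ => (q : ℝ) ^ q ^ j) atTop atTop :=
    (tendsto_pow_atTop_atTop_of_one_lt hq1R).comp
      (tendsto_pow_atTop_atTop_of_one_lt (lt_of_lt_of_le one_lt_two hq2))
  -- norms of the terms tend to 0, for every center t₀
  have hten : ∀ t₀ : C,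
      Tendsto (fun j : ℕ => ‖α j * ω ^ q ^ j / (θ ^ q ^ j - t₀)‖) atTop (nhds 0) := by
    intro t₀
    set r : ℝ := max (‖ω‖ / q) 1 with hr_def
    have hr : 0 < r := lt_of_lt_of_le one_pos (le_max_right _ _)
    refine squeeze_zero' (Eventually.of_forall fun j => norm_nonneg _) ?_ (hdecay r hr)
    filter_upwards [hinfty.eventually_gt_atTop ‖t₀‖] with j hj
    have hd : ‖θ ^ q ^ j - t₀‖ = (q : ℝ) ^ q ^ j := by
      rw [sub_eq_add_neg, ultra_norm_add_eq (by rw [norm_neg, hθn]; exact hj), hθn]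
    rw [norm_div, norm_mul, norm_pow, hd, mul_div_assoc]
    have h1 : ‖ω‖ ^ q ^ j / (q : ℝ) ^ q ^ j = (‖ω‖ / q) ^ q ^ j := (div_pow _ _ _).symm
    rw [h1]
    gcongr
    exact le_max_left _ _
  have hsum : ∀ t₀ : C, Summable fun j : ℕ => α j * ω ^ q ^ j / (θ ^ q ^ j - t₀) := by
    intro t₀
    apply NonarchimedeanAddGroup.summable_of_tendsto_cofinite_zero
    rw [Nat.cofinite_eq_atTop]
    exact tendsto_zero_iff_norm_tendsto_zero.mpr (hten t₀)
  refine ⟨fun t₀ _ => hsum t₀, ?_⟩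
  intro j₀
  set c : C := θ ^ q ^ j₀ with hc
  set A : C := α j₀ * ω ^ q ^ j₀ with hA
  set δ : ℝ := (q : ℝ) ^ q ^ j₀ with hδdef
  have hδ : 0 < δ := by positivity
  -- the comparison of denominators near the pole
  have hdc : ∀ j : ℕ, j ≠ j₀ → δ ≤ ‖θ ^ q ^ j - c‖ := by
    intro j hjne
    have hne : ‖θ ^ q ^ j‖ ≠ ‖(-c : C)‖ := by
      rw [norm_neg, hθn, hc, hθn]
      exact fun h => hjne (hexp.injective (hpowmono.injective h))
    have : ‖θ ^ q ^ j - c‖ = max ‖θ ^ q ^ j‖ ‖(-c : C)‖ := by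
      rw [sub_eq_add_neg]
      exact IsUltrametricDist.norm_add_eq_max_of_norm_ne_norm hne
    have hδc : δ = ‖c‖ := by rw [hc, hθn]
    rw [this, norm_neg]
    exact hδc.le.trans (le_max_right _ _)
  have hdeq : ∀ j : ℕ, j ≠ j₀ → ∀ t : C, ‖t - c‖ < δ →
      ‖θ ^ q ^ j - t‖ = ‖θ ^ q ^ j - c‖ := by
    intro j hjne t ht
    have : θ ^ q ^ j - t = (θ ^ q ^ j - c) + (c - t) := by ring
    rw [this, ultra_norm_add_eq]
    rw [← neg_sub t c, norm_neg]
    exact lt_of_lt_of_le ht (hdc j hjne)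
  -- the bound B
  set g : ℕ → ℝ := fun j => if j = j₀ then 0 else ‖α j * ω ^ q ^ j‖ / ‖θ ^ q ^ j - c‖ with hg
  have hg0 : Tendsto g atTop (nhds 0) := by
    refine (hten c).congr' ?_
    filter_upwards [eventually_gt_atTop j₀] with j hj
    have : j ≠ j₀ := Nat.ne_of_gt hj
    simp only [hg, if_neg this, norm_div]
  obtain ⟨B, hB⟩ := hg0.bddAbove_range
  have hBle : ∀ j, g j ≤ B := fun j => hB (Set.mem_range_self j)
  have hB0 : 0 ≤ B := le_trans (by simp [hg]) (hBle j₀)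
  -- the tail sum
  set T : C → C := fun t => ∑' j : ℕ, if j = j₀ then 0 else α j * ω ^ q ^ j / (θ ^ q ^ j - t)
    with hT
  have hTbound : ∀ t : C, ‖t - c‖ < δ → ‖T t‖ ≤ B := by
    intro t ht
    refine IsUltrametricDist.norm_tsum_le_of_forall_le_of_nonneg hB0 fun j => ?_
    by_cases hjne : j = j₀
    · simpa [hjne] using hB0
    · rw [if_neg hjne]
      have := hBle j
      rw [hg] at this
      simp only [if_neg hjne] at this
      rwa [norm_div, hdeq j hjne t ht]
  -- key identity near the pole
  have key : ∀ t : C, (∀ j : ℕ, t ≠ θ ^ q ^ j) → ‖t - c‖ < δ →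
      (t - c) * ∑' j : ℕ, α j * ω ^ q ^ j / (θ ^ q ^ j - t) = -A + (t - c) * T t := by
    intro t hts _
    have hsummt := hsum t
    rw [Summable.tsum_eq_add_tsum_ite hsummt j₀, mul_add]
    have hct : c - t ≠ 0 := sub_ne_zero.mpr (Ne.symm (hts j₀))
    have : (t - c) * (α j₀ * ω ^ q ^ j₀ / (θ ^ q ^ j₀ - t)) = -A := by
      rw [← hc, ← hA]
      field_simp
      ring
    rw [this, hT]
  -- conclude
  have htail : Tendsto (fun t : C => (t - c) * T t)
      (nhdsWithin c {t : C | ∀ j : ℕ, t ≠ θ ^ q ^ j}) (nhds 0) := by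
    have hb : Tendsto (fun t : C => ‖t - c‖ * B) (nhds c) (nhds 0) := by
      have : Tendsto (fun t : C => ‖t - c‖ * B) (nhds c) (nhds (‖c - c‖ * B)) :=
        (((continuous_id.sub continuous_const).norm).mul continuous_const).tendsto c
      simpa using this
    refine squeeze_zero_norm' ?_ (hb.mono_left nhdsWithin_le_nhds)
    have hev : ∀ᶠ t : C in nhdsWithin c {t : C | ∀ j : ℕ, t ≠ θ ^ q ^ j}, ‖t - c‖ < δ := by
      apply Filter.Eventually.filter_mono nhdsWithin_le_nhds
      have := Metric.ball_mem_nhds c hδ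
      filter_upwards [this] with t ht
      rwa [Metric.mem_ball, dist_eq_norm] at ht
    filter_upwards [hev] with t ht
    rw [norm_mul]
    exact mul_le_mul_of_nonneg_left (hTbound t ht) (norm_nonneg _)
  have hmain : Tendsto (fun t : C => -A + (t - c) * T t)
      (nhdsWithin c {t : C | ∀ j : ℕ, t ≠ θ ^ q ^ j}) (nhds (-A)) := by
    have := tendsto_const_nhds (x := -A)
      (f := nhdsWithin c {t : C | ∀ j : ℕ, t ≠ θ ^ q ^ j}) |>.add htail
    simpa using this
  refine hmain.congr' ?_
  have hev : ∀ᶠ t : C in nhdsWithin c {t : C | ∀ j : ℕ, t ≠ θ ^ q ^ j}, ‖t - c‖ < δ := by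
    apply Filter.Eventually.filter_mono nhdsWithin_le_nhds
    filter_upwards [Metric.ball_mem_nhds c hδ] with t ht
    rwa [Metric.mem_ball, dist_eq_norm] at ht
  filter_upwards [hev, self_mem_nhdsWithin] with t ht hts
  exact (key t hts ht).symm
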